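/- Let a, b, c be nonnegative real numbers with a + b + c = 1, set P = 5 + 3a + 7b + 5c, Q = 25a − 11b + 7c, σ = √(P² + 4Q), λ = (P + σ)/2 and μ = (P − σ)/2. Let i : ℕ → ℝ satisfy i(1) = 18, i(2) = 18·P + 2·Q, and i(n) = P·i(n−1) + Q·i(n−2) for all n ≥ 3. Then for every n ≥ 1, i(n) = ((18λ + 2Q)·λ^{n−1} − (18μ + 2Q)·μ^{n−1})/σ. (This is the Binet-type expansion of the expected Merrifield–Simmons index of the random hexagonal cactus obtained from the principal part of its generating function at the dominant singularity.) -/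

import Mathlib

/-- Binet-type expansion of the expected Merrifield–Simmons index of the random
hexagonal cactus. -/
theorem merrifield_simmons_binet (a b c : ℝ) (ha : 0 ≤ a) (hb : 0 ≤ b) (hc : 0 ≤ c)
    (habc : a + b + c = 1)
    (P Q σ lam mu : ℝ)
    (hP : P = 5 + 3 * a + 7 * b + 5 * c)
    (hQ : Q = 25 * a - 11 * b + 7 * c)
    (hσ : σ = Real.sqrt (P ^ 2 + 4 * Q))
    (hlam : lam = (P + σ) / 2)
    (hmu : mu = (P - σ) / 2)
    (i : ℕ → ℝ)
    (hi1 : i 1 = 18) (hi2 : i 2 = 18 * P + 2 * Q)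
    (hi : ∀ n, 3 ≤ n → i n = P * i (n - 1) + Q * i (n - 2)) :
    ∀ n, 1 ≤ n →
      i n = ((18 * lam + 2 * Q) * lam ^ (n - 1) - (18 * mu + 2 * Q) * mu ^ (n - 1)) / σ := by
  have hdisc : 0 < P ^ 2 + 4 * Q := by
    subst hP hQ
    nlinarith [sq_nonneg (a + b), sq_nonneg (a - b), mul_nonneg ha hb, mul_nonneg hb hc,
      mul_nonneg ha hc, sq_nonneg a, sq_nonneg b, sq_nonneg c]
  have hσpos : 0 < σ := by rw [hσ]; exact Real.sqrt_pos.mpr hdisc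
  have hσne : σ ≠ 0 := ne_of_gt hσpos
  have hσsq : σ ^ 2 = P ^ 2 + 4 * Q := by
    rw [hσ, Real.sq_sqrt hdisc.le]
  have hlamsq : lam ^ 2 = P * lam + Q := by
    rw [hlam]; nlinarith [hσsq]
  have hmusq : mu ^ 2 = P * mu + Q := by
    rw [hmu]; nlinarith [hσsq]
  have hsum : lam + mu = P := by rw [hlam, hmu]; ring
  have hdiff : lam - mu = σ := by rw [hlam, hmu]; ring
  set f : ℕ → ℝ := fun n => ((18 * lam + 2 * Q) * lam ^ n - (18 * mu + 2 * Q) * mu ^ n) / σ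
    with hf
  have key : ∀ n : ℕ, i (n + 1) = f n ∧ i (n + 2) = f (n + 1) := by
    intro n
    induction n with
    | zero =>
      constructor
      · rw [hi1, hf]
        field_simp
        linarith [hdiff]
      · rw [hi2, hf]
        field_simp
        linear_combination (-18 * (lam - mu)) * hsum - (18 * P + 2 * Q) * hdiff
    | succ m ih =>
      refine ⟨ih.2, ?_⟩
      have h3 : i (m + 3) = P * i (m + 2) + Q * i (m + 1) := by
        have := hi (m + 3) (by omega)
        simpa using this
      rw [show m + 1 + 2 = m + 3 by ring, h3, ih.1, ih.2, hf]
      simp only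
      field_simp
      linear_combination (-((18 * lam + 2 * Q) * lam ^ m) * hlamsq
        + ((18 * mu + 2 * Q) * mu ^ m) * hmusq)
  intro n hn
  obtain ⟨m, rfl⟩ : ∃ m, n = m + 1 := ⟨n - 1, by omega⟩
  simpa using (key m).1
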